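/- Let f : ℂ → ℂ be a nonconstant entire function and D ⊆ ∂𝔻 a subset of the unit circle whose complement 𝕋 \ D is dense in 𝕋. Then the set {w ∈ ℂ : f(w) ∈ 𝕋 \ D} has an accumulation point in ℂ. -/

import Mathlib

open Filter

lemma sphere_acc (p : ℂ) (hp : p ∈ Metric.sphere (0:ℂ) 1) :
    AccPt p (𝓟 (Metric.sphere (0:ℂ) 1)) := by
  rw [accPt_iff_nhds]
  intro V hV
  have hcont : ContinuousAt (fun t : ℝ => p * Complex.exp (t * Complex.I)) 0 := by
    fun_prop
  have hV' : (fun t : ℝ => p * Complex.exp (t * Complex.I)) ⁻¹' V ∈ nhds (0:ℝ) := by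
    apply hcont
    simpa using hV
  obtain ⟨ε, hε, hball⟩ := Metric.mem_nhds_iff.mp hV'
  set t : ℝ := min (ε/2) Real.pi with ht
  have htpos : 0 < t := lt_min (by linarith) Real.pi_pos
  have htmem : t ∈ Metric.ball (0:ℝ) ε := by
    simp only [Metric.mem_ball, dist_zero_right, Real.norm_eq_abs, abs_of_pos htpos]
    calc t ≤ ε/2 := min_le_left _ _
    _ < ε := by linarith
  have hpnorm : ‖p‖ = 1 := by simpa using hp
  have hpne : p ≠ 0 := by intro h; rw [h] at hpnorm; simp at hpnorm
  refine ⟨p * Complex.exp (t * Complex.I), ⟨hball htmem, ?_⟩, ?_⟩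
  · simp [norm_mul, hpnorm, Complex.norm_exp_ofReal_mul_I]
  · intro h
    have hone : Complex.exp (t * Complex.I) = 1 := by
      have h' : p * Complex.exp (t * Complex.I) = p * 1 := by rw [mul_one]; exact h
      exact mul_left_cancel₀ hpne h'
    rw [Complex.exp_eq_one_iff] at hone
    obtain ⟨n, hn⟩ := hone
    have htc : (t : ℂ) = (n : ℂ) * (2 * Real.pi) := by
      have hI : (Complex.I : ℂ) ≠ 0 := Complex.I_ne_zero
      apply mul_right_cancel₀ hI
      rw [hn]; ring
    have htr : t = (n : ℝ) * (2 * Real.pi) := by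
      have := congrArg Complex.re htc
      simpa using this
    have htle : t ≤ Real.pi := min_le_right _ _
    rcases le_or_gt n 0 with hn0 | hn0
    · have : (n : ℝ) * (2 * Real.pi) ≤ 0 := by
        apply mul_nonpos_of_nonpos_of_nonneg
        · exact_mod_cast hn0
        · positivity
      linarith [htr ▸ htpos, htr ▸ this]
    · have hn1 : (1 : ℝ) ≤ (n : ℝ) := by exact_mod_cast hn0
      have : 2 * Real.pi ≤ (n : ℝ) * (2 * Real.pi) := by
        nlinarith [Real.pi_pos]
      rw [← htr] at this
      linarith [Real.pi_pos]

theorem stmt_11 (f : ℂ → ℂ) (hf : Differentiable ℂ f) (hnc : ∃ a b, f a ≠ f b)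
    (D : Set ℂ) (hD : D ⊆ Metric.sphere (0 : ℂ) 1)
    (hdense : ∀ z ∈ Metric.sphere (0 : ℂ) 1, z ∈ closure (Metric.sphere (0 : ℂ) 1 \ D)) :
    ∃ w₀ : ℂ, AccPt w₀ (𝓟 {w : ℂ | f w ∈ Metric.sphere (0 : ℂ) 1 \ D}) := by
  obtain ⟨a, b, hab⟩ := hnc
  have hw : ∃ w₀ : ℂ, ‖f w₀‖ = 1 := by
    by_contra h
    push_neg at h
    set A := {w : ℂ | ‖f w‖ < 1} with hAdef
    set B := {w : ℂ | 1 < ‖f w‖} with hBdef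
    have hA : IsOpen A := isOpen_lt (hf.continuous.norm) continuous_const
    have hB : IsOpen B := isOpen_lt continuous_const (hf.continuous.norm)
    have hdisj : Disjoint A B := by
      rw [Set.disjoint_left]
      intro w h1 h2
      rw [hAdef, Set.mem_setOf_eq] at h1
      rw [hBdef, Set.mem_setOf_eq] at h2
      exact absurd (h1.trans h2) (lt_irrefl _)
    have hcov : (Set.univ : Set ℂ) ⊆ A ∪ B := by
      intro w _
      rcases lt_trichotomy ‖f w‖ 1 with h1 | h1 | h1
      · exact Or.inl h1
      · exact absurd h1 (h w)
      · exact Or.inr h1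
    rcases isPreconnected_univ.subset_or_subset hA hB hdisj hcov with hsub | hsub
    · have hbdd : Bornology.IsBounded (Set.range f) := by
        apply Bornology.IsBounded.subset (Metric.isBounded_closedBall (x := (0:ℂ)) (r := 1))
        rintro _ ⟨w, rfl⟩
        have : w ∈ A := hsub (Set.mem_univ w)
        simpa [Metric.mem_closedBall] using le_of_lt this
      exact hab (hf.apply_eq_apply_of_bounded hbdd a b)
    · have hne : ∀ w, f w ≠ 0 := by
        intro w hw0
        have : w ∈ B := hsub (Set.mem_univ w)
        rw [hBdef] at this
        simp only [Set.mem_setOf_eq, hw0, norm_zero] at this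
        linarith
      have hg : Differentiable ℂ (fun w => (f w)⁻¹) := hf.inv hne
      have hbdd : Bornology.IsBounded (Set.range fun w => (f w)⁻¹) := by
        apply Bornology.IsBounded.subset (Metric.isBounded_closedBall (x := (0:ℂ)) (r := 1))
        rintro _ ⟨w, rfl⟩
        have hw1 : 1 < ‖f w‖ := hsub (Set.mem_univ w)
        simp only [Metric.mem_closedBall, dist_zero_right, norm_inv]
        rw [inv_le_one_iff₀]
        right; exact le_of_lt hw1
      have heq := hg.apply_eq_apply_of_bounded hbdd a b
      exact hab (by
        have ha := hne a; have hb := hne b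
        field_simp at heq
        exact heq.symm)
  obtain ⟨w₀, hw₀⟩ := hw
  have hsph : f w₀ ∈ Metric.sphere (0 : ℂ) 1 := by
    simpa [Metric.mem_sphere, dist_zero_right] using hw₀
  refine ⟨w₀, accPt_iff_nhds.mpr ?_⟩
  intro U hU
  rcases (hf.analyticAt w₀).eventually_constant_or_nhds_le_map_nhds with hconst | hopen
  · exfalso
    have hEq : Set.EqOn f (fun _ => f w₀) Set.univ :=
      AnalyticOnNhd.eqOn_of_preconnected_of_eventuallyEq
        (fun z _ => hf.analyticAt z) (fun z _ => analyticAt_const)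
        isPreconnected_univ (Set.mem_univ w₀) hconst
    exact hab ((hEq (Set.mem_univ a)).trans (hEq (Set.mem_univ b)).symm)
  · have hfU : f '' U ∈ nhds (f w₀) := hopen (image_mem_map hU)
    obtain ⟨V, hVsub, hVopen, hVmem⟩ := mem_nhds_iff.mp hfU
    have hy : ∃ y ∈ V ∩ (Metric.sphere (0:ℂ) 1 \ D), y ≠ f w₀ := by
      have hz : ∃ z ∈ Metric.sphere (0:ℂ) 1, z ∈ V ∧ z ≠ f w₀ := by
        have hacc := sphere_acc (f w₀) hsph
        rw [accPt_iff_nhds] at hacc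
        obtain ⟨y, ⟨hyV, hysph⟩, hyne⟩ := hacc V (hVopen.mem_nhds hVmem)
        exact ⟨y, hysph, hyV, hyne⟩
      obtain ⟨z, hzsph, hzV, hzne⟩ := hz
      have hcl := hdense z hzsph
      rw [mem_closure_iff] at hcl
      obtain ⟨y, hyVz, hyD⟩ := hcl (V \ {f w₀}) (hVopen.sdiff isClosed_singleton) ⟨hzV, hzne⟩
      exact ⟨y, ⟨hyVz.1, hyD⟩, hyVz.2⟩
    obtain ⟨y, ⟨hyV, hyS⟩, hyne⟩ := hy
    obtain ⟨u, huU, hufu⟩ := hVsub hyV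
    refine ⟨u, ⟨huU, by simp only [Set.mem_setOf_eq, hufu]; exact hyS⟩, ?_⟩
    rintro rfl
    exact hyne hufu.symm
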